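/- For c₂ = (11-√41)/10, the quantity Γ₆(1) (in the paper's normalization, i.e. without the factorial factor) equals -16(17-2√41)/(75(71-11√41)), and this value is nonzero; hence discrete order six is unattainable for the 2-stage explicit order-five method. -/
import Mathlib


/-- For c₂ = (11-√41)/10, the quantity Γ₆(1) (without the factorial factor)
for the order-five family equals -16(17-2√41)/(75(71-11√41)), which is nonzero;
hence discrete order six is unattainable. -/
theorem stmt7 :
    (let c₂ : ℝ := (11 - Real.sqrt 41) / 10;
    let α : ℝ := 1;
    let v : ℝ := -((α+1)^2 * ((10*α-5)*c₂^2 - 15*c₂*α^2 + (α+1)*(6*α^2-3*α+1))) /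
        (5*c₂^2 - 1);
    let tb1 : ℝ := (α^2*(α+1) * (20*c₂^4 - (30*α+10)*c₂^3 + (12*α^2+3*α-13)*c₂^2
        + (4*α^2+11*α+3)*c₂ - 2*α*(α+1))) / (4*c₂*(5*c₂^2-1)*(c₂+1));
    let tb2 : ℝ := (α^2*(α+1)^2 * (5*c₂^2 - (4*α-3)*c₂ - 2*α)) /
        (4*c₂*(5*c₂^2-1)*(c₂-1));
    let b2 : ℝ := -(α^2*(α+1)^2 * (5*c₂^2 - (4*α+7)*c₂ + 2*α+2)) /
        (4*c₂*(5*c₂^2-1)*(c₂+1));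
    let Γ6 : ℝ := (1 - v)*(-1)^6/6 + tb1*(-1)^5 + tb2*(-(1-c₂))^5 + b2*c₂^5 - 1/6;
    Γ6 = -16*(17 - 2*Real.sqrt 41) / (75*(71 - 11*Real.sqrt 41)) ∧ Γ6 ≠ 0) := by
  have h41 : Real.sqrt 41 ^ 2 = 41 := Real.sq_sqrt (by norm_num)
  set s := Real.sqrt 41 with hs
  have h6 : (6:ℝ) < s := by nlinarith [Real.sqrt_nonneg 41, h41]
  have h7 : s < 6.41 := by nlinarith [Real.sqrt_nonneg 41, h41]
  have hc2 : (11 - s)/10 ≠ 0 := by nlinarith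
  have hd1 : 5*((11-s)/10)^2 - 1 ≠ 0 := by nlinarith
  have hd2 : (11-s)/10 + 1 ≠ 0 := by nlinarith
  have hd3 : (11-s)/10 - 1 ≠ 0 := by nlinarith
  have hd4 : (75:ℝ)*(71 - 11*s) ≠ 0 := by nlinarith
  have hD1 : 4 * ((11 - s) / 10) * (5 * ((11 - s) / 10) ^ 2 - 1) * ((11 - s) / 10 + 1) ≠ 0 :=
    mul_ne_zero (mul_ne_zero (mul_ne_zero (by norm_num) hc2) hd1) hd2
  have hD2 : 4 * ((11 - s) / 10) * (5 * ((11 - s) / 10) ^ 2 - 1) * ((11 - s) / 10 - 1) ≠ 0 :=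
    mul_ne_zero (mul_ne_zero (mul_ne_zero (by norm_num) hc2) hd1) hd3
  dsimp only
  have hv : -((1 + 1) ^ 2 *
        ((10 * 1 - 5) * ((11 - s) / 10) ^ 2 - 15 * ((11 - s) / 10) * 1 ^ 2 +
          (1 + 1) * (6 * 1 ^ 2 - 3 * 1 + 1))) / (5 * ((11 - s) / 10) ^ 2 - 1)
      = -76 - 12*s := by
    rw [div_eq_iff hd1]
    linear_combination (-48/5 + 3/5*s) * h41
  have htb1 : 1 ^ 2 * (1 + 1) *
        (20 * ((11 - s) / 10) ^ 4 - (30 * 1 + 10) * ((11 - s) / 10) ^ 3 +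
          (12 * 1 ^ 2 + 3 * 1 - 13) * ((11 - s) / 10) ^ 2 +
          (4 * 1 ^ 2 + 11 * 1 + 3) * ((11 - s) / 10) - 2 * 1 * (1 + 1)) /
        (4 * ((11 - s) / 10) * (5 * ((11 - s) / 10) ^ 2 - 1) * ((11 - s) / 10 + 1))
      = 45/4 + 7/4*s := by
    rw [div_eq_iff hD1]
    linear_combination (26167/2000 - 5301/2000*s + 341/2000*s^2 - 7/2000*s^3) * h41
  have htb2 : 1 ^ 2 * (1 + 1) ^ 2 *
        (5 * ((11 - s) / 10) ^ 2 - (4 * 1 - 3) * ((11 - s) / 10) - 2 * 1) /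
        (4 * ((11 - s) / 10) * (5 * ((11 - s) / 10) ^ 2 - 1) * ((11 - s) / 10 - 1))
      = 201/4 + 31/4*s := by
    rw [div_eq_iff hD2]
    linear_combination (4871/2000 - 6093/2000*s + 853/2000*s^2 - 31/2000*s^3) * h41
  have hb2 : -(1 ^ 2 * (1 + 1) ^ 2 *
        (5 * ((11 - s) / 10) ^ 2 - (4 * 1 + 7) * ((11 - s) / 10) + 2 * 1 + 2)) /
        (4 * ((11 - s) / 10) * (5 * ((11 - s) / 10) ^ 2 - 1) * ((11 - s) / 10 + 1))
      = 0 := by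
    rw [div_eq_iff hD1]
    linear_combination (-1/5 : ℝ) * h41
  rw [hv, htb1, htb2, hb2]
  have key : (1 - (-76 - 12*s)) * (-1:ℝ) ^ 6 / 6 + (45/4 + 7/4*s) * (-1:ℝ) ^ 5 +
      (201/4 + 31/4*s) * (-(1 - (11 - s) / 10)) ^ 5 + 0 * ((11 - s) / 10) ^ 5 - 1/6
      = -61/75 - 3/25*s := by
    linear_combination (-21761/400000 - 1793/200000*s - 9/6250*s^2 - 23/200000*s^3
      - 31/400000*s^4) * h41
  rw [key]
  constructor
  · rw [eq_div_iff hd4]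
    linear_combination (99:ℝ) * h41
  · nlinarith
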